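/- Let N and n be positive integers, u an n×n real (or complex) matrix, and m, x ∈ ℕⁿ with m₁+⋯+m_n + x₁+⋯+x_n ≤ N. Then the terminating Euler-type transformation holds: F₁^(n)(−m;−x;−N;u) = [(Σ_i x_i − N)_{Σ_i m_i} / (−N)_{Σ_i m_i}] · F₁^(n)(−m;−x; N+1−Σ_i(x_i+m_i); 1−u), where 1−u denotes the matrix with entries 1−u_{ij}, and F₁^(n)(−m;−x;c;v) for a scalar third parameter c is defined by the same terminating sum with (−N)_{Σk_{ij}} replaced by (c)_{Σk_{ij}} in the denominator. -/

import Mathlib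

/-- The Pochhammer symbol `(a)ᵣ = a(a+1)⋯(a+r-1)`. -/
noncomputable def poch (a : ℝ) (r : ℕ) : ℝ := Polynomial.eval a (ascPochhammer ℝ r)

/-- The terminating Gelfand–Aomoto hypergeometric sum `F₁⁽ⁿ⁾(-m;-x;c;u)` with a
scalar third parameter `c`: the sum runs over all `n × n` matrices `(k_{ij})` of
nonnegative integers for which every term has nonzero numerator Pochhammers,
i.e. `∑_j k_{ij} ≤ m_i` and `∑_j k_{ji} ≤ x_i` for all `i` (for `c = -N` with
`∑m + ∑x ≤ N` this automatically restricts the sum to `∑_{i,j} k_{ij} ≤ N`). -/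
noncomputable def F1 (n : ℕ) (c : ℝ) (m x : Fin n → ℕ) (u : Fin n → Fin n → ℝ) : ℝ :=
  ∑ k ∈ Finset.filter
      (fun k => (∀ i, ∑ j, k i j ≤ m i) ∧ (∀ i, ∑ j, k j i ≤ x i))
      (Fintype.piFinset fun _ : Fin n => Fintype.piFinset fun _ : Fin n =>
        Finset.range ((∑ i, m i) + 1)),
    ((∏ i, poch (-(m i : ℝ)) (∑ j, k i j)) * ∏ i, poch (-(x i : ℝ)) (∑ j, k j i)) /
      ((∏ i, ∏ j, ((k i j).factorial : ℝ)) * poch c (∑ i, ∑ j, k i j)) *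
      ∏ i, ∏ j, u i j ^ k i j

set_option maxHeartbeats 1600000

open Nat Finset

lemma poch_zero (a : ℝ) : poch a 0 = 1 := by simp [poch]

lemma poch_succ (a : ℝ) (r : ℕ) : poch a (r + 1) = poch a r * (a + r) := by
  simp [poch, ascPochhammer_succ_right]

lemma poch_succ_left (a : ℝ) (r : ℕ) : poch a (r + 1) = a * poch (a + 1) r := by
  simp [poch, ascPochhammer_succ_left, Polynomial.eval_comp]

lemma poch_one (a : ℝ) : poch a 1 = a := by simp [poch]

lemma poch_add (a : ℝ) (p q : ℕ) : poch a (p + q) = poch a p * poch (a + p) q := by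
  induction q with
  | zero => simp [poch_zero]
  | succ q ih => rw [← add_assoc, poch_succ, ih, poch_succ]; push_cast; ring

lemma poch_pos {a : ℝ} (ha : 0 < a) (r : ℕ) : 0 < poch a r := by
  induction r with
  | zero => simp [poch_zero]
  | succ r ih => rw [poch_succ]; positivity

lemma poch_nat_zero (r : ℕ) (hr : 0 < r) : poch 0 r = 0 := by
  obtain ⟨t, rfl⟩ := Nat.exists_eq_add_of_le hr
  rw [show 1 + t = t + 1 by ring, poch_succ_left, zero_mul]

lemma poch_neg_nat_eq_zero {m r : ℕ} (h : m < r) : poch (-(m : ℝ)) r = 0 := by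
  obtain ⟨t, rfl⟩ := Nat.exists_eq_add_of_le h
  rw [show m + 1 + t = m + (1 + t) by ring, poch_add, poch_add, poch_succ_left]
  simp

lemma poch_neg_fac (q d : ℕ) :
    poch (-((q + d : ℕ) : ℝ)) q * (d ! : ℝ) = (-1) ^ q * ((q + d)! : ℝ) := by
  induction q generalizing d with
  | zero => simp [poch_zero]
  | succ q ih =>
    have h1 : poch (-((q + 1 + d : ℕ) : ℝ)) (q + 1)
        = poch (-((q + (d+1) : ℕ) : ℝ)) q * (-((d:ℝ)+1)) := by
      rw [poch_succ]; push_cast; ring_nf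
    have h2 := ih (d + 1)
    have hd : ((d+1)! : ℝ) = (d+1) * d ! := by push_cast [Nat.factorial_succ]; ring
    rw [h1]
    have : poch (-((q + (d + 1) : ℕ) : ℝ)) q * (d ! : ℝ) * ((d:ℝ)+1)
        = (-1) ^ q * ((q + (d+1))! : ℝ) := by
      rw [← h2, hd]; ring
    calc poch (-((q + (d+1) : ℕ) : ℝ)) q * (-((d:ℝ)+1)) * (d ! : ℝ)
        = -(poch (-((q + (d + 1) : ℕ) : ℝ)) q * (d ! : ℝ) * ((d:ℝ)+1)) := by ring
      _ = (-1)^(q+1) * ((q+1+d)! : ℝ) := by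
          rw [this, show q + (d+1) = q + 1 + d by ring]; ring

lemma poch_cast_succ_fac (p q : ℕ) :
    poch ((p : ℝ) + 1) q * (p ! : ℝ) = ((p + q)! : ℝ) := by
  induction q with
  | zero => simp [poch_zero]
  | succ q ih =>
    have h : poch ((p:ℝ)+1) (q+1) * (p ! : ℝ)
        = (poch ((p:ℝ)+1) q * (p ! : ℝ)) * ((p:ℝ)+1+q) := by rw [poch_succ]; ring
    rw [h, ih, show p + (q+1) = (p+q)+1 by ring, Nat.factorial_succ]
    push_cast; ring

lemma poch_neg_choose {a j : ℕ} (h : j ≤ a) :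
    poch (-(a : ℝ)) j = (-1) ^ j * (a.choose j : ℝ) * (j ! : ℝ) := by
  obtain ⟨d, rfl⟩ := Nat.exists_eq_add_of_le h
  have h1 := poch_neg_fac j d
  have h2 : ((j + d).choose j : ℝ) * (j ! : ℝ) * (d ! : ℝ) = ((j+d)! : ℝ) := by
    rw [← Nat.cast_mul, ← Nat.cast_mul]
    congr 1
    have h := Nat.add_choose_mul_factorial_mul_factorial d j
    rw [Nat.add_comm d j] at h
    simpa [Nat.mul_comm, Nat.mul_assoc, Nat.mul_left_comm] using h
  have hd : (d ! : ℝ) ≠ 0 := by positivity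
  have h1' : poch (-((j+d:ℕ):ℝ)) j * (d ! : ℝ)
      = ((-1)^j * ((j+d).choose j : ℝ) * (j ! : ℝ)) * (d ! : ℝ) := by
    rw [poch_neg_fac j d, ← h2]; ring
  exact mul_right_cancel₀ hd h1'

lemma pcv (a : ℕ) : ∀ b c : ℝ,
    ∑ j ∈ Finset.range (a+1),
      (a.choose j : ℝ) * (-1)^j * poch b j * poch (c + j) (a - j)
      = poch (c - b) a := by
  induction a with
  | zero => intro b c; simp [poch_zero]
  | succ a ih =>
    intro b c
    have e1 : ∑ j ∈ Finset.range (a+1+1),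
          ((a+1).choose j : ℝ) * (-1)^j * poch b j * poch (c + j) (a+1-j)
        = (∑ j ∈ Finset.range (a+1), ((a+1).choose (j+1) : ℝ) * (-1)^(j+1)
            * poch b (j+1) * poch (c + (j+1 : ℕ)) (a-j)) + poch c (a+1) := by
      rw [Finset.sum_range_succ']
      congr 1
      · apply Finset.sum_congr rfl; intro j hj
        have h : a + 1 - (j+1) = a - j := by omega
        rw [h]
      · simp [poch_zero]
    have e2 : ∑ j ∈ Finset.range (a+1+1),
          (a.choose j : ℝ) * (-1)^j * poch b j * poch (c + j) (a+1-j)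
        = (∑ j ∈ Finset.range (a+1), (a.choose (j+1) : ℝ) * (-1)^(j+1)
            * poch b (j+1) * poch (c + (j+1 : ℕ)) (a-j)) + poch c (a+1) := by
      rw [Finset.sum_range_succ']
      congr 1
      · apply Finset.sum_congr rfl; intro j hj
        have h : a + 1 - (j+1) = a - j := by omega
        rw [h]
      · simp [poch_zero]
    have e2' : ∑ j ∈ Finset.range (a+1+1),
          (a.choose j : ℝ) * (-1)^j * poch b j * poch (c + j) (a+1-j)
        = ∑ j ∈ Finset.range (a+1),
          (a.choose j : ℝ) * (-1)^j * poch b j * poch (c + j) (a+1-j) := by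
      rw [Finset.sum_range_succ]; simp [Nat.choose_succ_self]
    -- main computation
    have key : ∀ j ∈ Finset.range (a+1),
        ((a+1).choose (j+1) : ℝ) * (-1)^(j+1) * poch b (j+1) * poch (c + (j+1 : ℕ)) (a-j)
          + (a.choose j : ℝ) * (-1)^j * poch b j * poch (c + j) (a+1-j)
          - (a.choose (j+1) : ℝ) * (-1)^(j+1) * poch b (j+1) * poch (c + (j+1 : ℕ)) (a-j)
        = (c - b) * ((a.choose j : ℝ) * (-1)^j * poch b j * poch ((c+1) + j) (a-j)) := by
      intro j hj
      have hj' : j < a + 1 := Finset.mem_range.mp hj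
      have hch : ((a+1).choose (j+1) : ℝ) = (a.choose j : ℝ) + (a.choose (j+1) : ℝ) := by
        rw [Nat.choose_succ_succ]; push_cast; ring
      have h1 : a + 1 - j = (a - j) + 1 := by omega
      have h2 : poch (c + j) ((a-j)+1) = (c + j) * poch ((c+1) + j) (a-j) := by
        rw [poch_succ_left]; ring_nf
      have h3 : poch b (j+1) = poch b j * (b + j) := poch_succ b j
      have h4 : poch (c + ((j+1 : ℕ) : ℝ)) (a-j) = poch ((c+1) + j) (a-j) := by
        push_cast; ring_nf
      rw [hch, h1, h2, h3, h4]
      ring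
    calc ∑ j ∈ Finset.range (a+1+1),
          ((a+1).choose j : ℝ) * (-1)^j * poch b j * poch (c + j) (a+1-j)
        = ∑ j ∈ Finset.range (a+1),
            (((a+1).choose (j+1) : ℝ) * (-1)^(j+1) * poch b (j+1) * poch (c + (j+1 : ℕ)) (a-j)
            + (a.choose j : ℝ) * (-1)^j * poch b j * poch (c + j) (a+1-j)
            - (a.choose (j+1) : ℝ) * (-1)^(j+1) * poch b (j+1) * poch (c + (j+1 : ℕ)) (a-j)) := by
          rw [Finset.sum_sub_distrib, Finset.sum_add_distrib]
          have := e2'.symm.trans e2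
          -- Σ_{a+1} G = Σ (a.choose(j+1)...) + poch c (a+1)
          rw [e1]
          linarith [this]
      _ = ∑ j ∈ Finset.range (a+1),
            (c - b) * ((a.choose j : ℝ) * (-1)^j * poch b j * poch ((c+1) + j) (a-j)) :=
          Finset.sum_congr rfl key
      _ = (c - b) * ∑ j ∈ Finset.range (a+1),
            (a.choose j : ℝ) * (-1)^j * poch b j * poch ((c+1) + j) (a-j) := by
          rw [Finset.mul_sum]
      _ = (c - b) * poch ((c+1) - b) a := by rw [ih b (c+1)]
      _ = poch (c - b) (a+1) := by
          rw [poch_succ_left]; ring_nf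

lemma cv (a : ℕ) (b c : ℝ) (hc : 0 < c) :
    ∑ j ∈ Finset.range (a+1), poch (-(a:ℝ)) j * poch b j / ((j ! : ℝ) * poch c j)
      = poch (c - b) a / poch c a := by
  have hca : poch c a ≠ 0 := ne_of_gt (poch_pos hc a)
  rw [eq_div_iff hca, Finset.sum_mul, ← pcv a b c]
  apply Finset.sum_congr rfl
  intro j hj
  have hj' : j ≤ a := by have := Finset.mem_range.mp hj; omega
  have hsplit : poch c a = poch c j * poch (c + j) (a - j) := by
    conv_lhs => rw [show a = j + (a - j) by omega]
    exact poch_add c j (a - j)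
  have hfj : (j ! : ℝ) ≠ 0 := by positivity
  have hcj : poch c j ≠ 0 := ne_of_gt (poch_pos hc j)
  rw [poch_neg_choose hj', hsplit]
  field_simp

section
variable {n : ℕ}

lemma shift_sum (r : ℕ) (p : Fin n × Fin n) (f : (Fin n × Fin n → ℕ) → ℝ) :
    ∑ s ∈ (univ : Finset (Fin n × Fin n)).piAntidiag (r+1), (s p : ℝ) * f s
      = ∑ s ∈ (univ : Finset (Fin n × Fin n)).piAntidiag r,
          ((s p : ℝ) + 1) * f (Function.update s p (s p + 1)) := by
  rw [← Finset.sum_filter_of_ne (p := fun s => s p ≠ 0)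
    (by intro s hs h hsp; exact h (by simp [hsp]))]
  apply Finset.sum_nbij' (i := fun s => Function.update s p (s p - 1))
    (j := fun s => Function.update s p (s p + 1))
  · intro s hs
    simp only [Finset.mem_filter, Finset.mem_piAntidiag] at hs ⊢
    obtain ⟨⟨hsum, -⟩, hne⟩ := hs
    refine ⟨?_, by simp⟩
    rw [Finset.sum_update_of_mem (Finset.mem_univ p)]
    rw [← Finset.sum_erase_add _ _ (Finset.mem_univ p), Finset.erase_eq] at hsum
    omega
  · intro s hs
    simp only [Finset.mem_filter, Finset.mem_piAntidiag] at hs ⊢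
    obtain ⟨hsum, -⟩ := hs
    refine ⟨⟨?_, by simp⟩, by simp⟩
    rw [Finset.sum_update_of_mem (Finset.mem_univ p)]
    rw [← Finset.sum_erase_add _ _ (Finset.mem_univ p), Finset.erase_eq] at hsum
    omega
  · intro s hs
    simp only [Finset.mem_filter] at hs
    funext q
    rcases eq_or_ne q p with rfl | hq
    · simp only [Function.update_self]
      have := hs.2; omega
    · simp [Function.update_of_ne hq]
  · intro s hs
    funext q
    rcases eq_or_ne q p with rfl | hq
    · simp only [Function.update_self]; omega
    · simp [Function.update_of_ne hq]
  · intro s hs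
    simp only [Finset.mem_filter] at hs
    have hsp : 1 ≤ s p := by have := hs.2; omega
    have e : s p - 1 + 1 = s p := by omega
    simp only [Function.update_self, Function.update_idem, e, Function.update_eq_self]
    congr 1
    have : ((s p - 1 : ℕ) : ℝ) = (s p : ℝ) - 1 := by
      push_cast [Nat.cast_sub hsp]; ring
    rw [this]; ring

lemma prod_update_fac (s : Fin n × Fin n → ℕ) (p : Fin n × Fin n) :
    (∏ q, (((Function.update s p (s p + 1)) q)! : ℝ))
      = ((s p : ℝ) + 1) * ∏ q, ((s q)! : ℝ) := by
  have h1 : ∀ q ∈ Finset.univ.erase p,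
      (((Function.update s p (s p + 1)) q)! : ℝ) = ((s q)! : ℝ) := by
    intro q hq
    rw [Function.update_of_ne (Finset.mem_erase.mp hq).1]
  have hA : (∏ q, (((Function.update s p (s p + 1)) q)! : ℝ))
      = (∏ q ∈ Finset.univ.erase p, ((s q)! : ℝ)) * (((s p + 1))! : ℝ) := by
    rw [← Finset.prod_erase_mul _ _ (Finset.mem_univ p)]
    rw [Finset.prod_congr rfl h1, Function.update_self]
  have hB : (∏ q, ((s q)! : ℝ))
      = (∏ q ∈ Finset.univ.erase p, ((s q)! : ℝ)) * ((s p)! : ℝ) :=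
    (Finset.prod_erase_mul _ _ (Finset.mem_univ p)).symm
  rw [hA, hB]
  push_cast [Nat.factorial_succ]
  ring

lemma row_sum_update (s : Fin n × Fin n → ℕ) (p : Fin n × Fin n) (i : Fin n) :
    (∑ j, Function.update s p (s p + 1) (i, j))
      = (∑ j, s (i, j)) + (if i = p.1 then 1 else 0) := by
  have key : ∀ j, Function.update s p (s p + 1) (i, j)
      = s (i, j) + (if i = p.1 ∧ j = p.2 then 1 else 0) := by
    intro j
    rcases eq_or_ne (i, j) p with h | h
    · have h1 : i = p.1 ∧ j = p.2 := by rw [← h]; exact ⟨rfl, rfl⟩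
      rw [h, Function.update_self, if_pos h1, ← h]
    · rw [Function.update_of_ne h, if_neg, add_zero]
      intro ⟨h1, h2⟩; exact h (Prod.ext h1 h2)
  rw [Finset.sum_congr rfl (fun j _ => key j), Finset.sum_add_distrib]
  congr 1
  rcases eq_or_ne i p.1 with hi | hi
  · subst hi; simp
  · simp [hi]

lemma col_sum_update (s : Fin n × Fin n → ℕ) (p : Fin n × Fin n) (j : Fin n) :
    (∑ i, Function.update s p (s p + 1) (i, j))
      = (∑ i, s (i, j)) + (if j = p.2 then 1 else 0) := by
  have key : ∀ i, Function.update s p (s p + 1) (i, j)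
      = s (i, j) + (if i = p.1 ∧ j = p.2 then 1 else 0) := by
    intro i
    rcases eq_or_ne (i, j) p with h | h
    · have h1 : i = p.1 ∧ j = p.2 := by rw [← h]; exact ⟨rfl, rfl⟩
      rw [h, Function.update_self, if_pos h1, ← h]
    · rw [Function.update_of_ne h, if_neg, add_zero]
      intro ⟨h1, h2⟩; exact h (Prod.ext h1 h2)
  rw [Finset.sum_congr rfl (fun i _ => key i), Finset.sum_add_distrib]
  congr 1
  rcases eq_or_ne j p.2 with hj | hj
  · subst hj; simp
  · simp [hj]

lemma prod_poch_bump (α : Fin n → ℝ) (R : Fin n → ℕ) (i0 : Fin n) :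
    (∏ i, poch (α i) (R i + if i = i0 then 1 else 0))
      = (α i0 + R i0) * ∏ i, poch (α i) (R i) := by
  have key : ∀ i, poch (α i) (R i + if i = i0 then 1 else 0)
      = poch (α i) (R i) * (if i = i0 then (α i0 + R i0) else 1) := by
    intro i
    rcases eq_or_ne i i0 with rfl | hi
    · rw [if_pos rfl, if_pos rfl, poch_succ]
    · simp [hi]
  rw [Finset.prod_congr rfl (fun i _ => key i), Finset.prod_mul_distrib,
      Fintype.prod_ite_eq' i0 (fun _ => (α i0 + R i0))]
  ring
end

section
variable {n : ℕ}

lemma G_lemma (α β : Fin n → ℝ) : ∀ r : ℕ,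
    ∑ s ∈ (univ : Finset (Fin n × Fin n)).piAntidiag r,
      (∏ p, ((s p)! : ℝ))⁻¹ * (∏ i, poch (α i) (∑ j, s (i, j)))
        * (∏ j, poch (β j) (∑ i, s (i, j)))
      = poch (∑ i, α i) r * poch (∑ j, β j) r / (r ! : ℝ) := by
  intro r
  induction r with
  | zero =>
    have h0 : (univ : Finset (Fin n × Fin n)).piAntidiag 0 = {fun _ => 0} := by
      ext s
      simp [Finset.mem_piAntidiag, funext_iff, Finset.sum_eq_zero_iff]
    simp [h0, poch_zero]
  | succ r ih =>
    set g : (Fin n × Fin n → ℕ) → ℝ := fun s =>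
      (∏ p, ((s p)! : ℝ))⁻¹ * (∏ i, poch (α i) (∑ j, s (i, j)))
        * (∏ j, poch (β j) (∑ i, s (i, j))) with hg
    have bump : ∀ (p : Fin n × Fin n) (s : Fin n × Fin n → ℕ),
        ((s p : ℝ) + 1) * g (Function.update s p (s p + 1))
          = (α p.1 + (∑ j, s (p.1, j))) * (β p.2 + (∑ i, s (i, p.2))) * g s := by
      intro p s
      simp only [hg]
      have hR : (∏ i, poch (α i) (∑ j, Function.update s p (s p + 1) (i, j)))
          = ∏ i, poch (α i) ((∑ j, s (i, j)) + if i = p.1 then 1 else 0) :=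
        Finset.prod_congr rfl (fun i _ => by rw [row_sum_update s p i])
      have hC : (∏ j, poch (β j) (∑ i, Function.update s p (s p + 1) (i, j)))
          = ∏ j, poch (β j) ((∑ i, s (i, j)) + if j = p.2 then 1 else 0) :=
        Finset.prod_congr rfl (fun j _ => by rw [col_sum_update s p j])
      rw [prod_update_fac s p, hR, hC,
          prod_poch_bump α (fun i => ∑ j, s (i, j)) p.1,
          prod_poch_bump β (fun j => ∑ i, s (i, j)) p.2]
      have hsp : ((s p : ℝ) + 1) ≠ 0 := by positivity
      field_simp
    have step1 : ((r:ℝ)+1) * ∑ s ∈ (univ : Finset (Fin n × Fin n)).piAntidiag (r+1), g s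
        = ∑ p : Fin n × Fin n,
            ∑ s ∈ (univ : Finset (Fin n × Fin n)).piAntidiag (r+1), (s p : ℝ) * g s := by
      rw [Finset.mul_sum, Finset.sum_comm]
      apply Finset.sum_congr rfl
      intro s hs
      rw [← Finset.sum_mul]
      congr 1
      simp only [Finset.mem_piAntidiag] at hs
      rw [← Nat.cast_sum Finset.univ s, hs.1]
      push_cast; ring
    have step2 : ∀ p : Fin n × Fin n,
        ∑ s ∈ (univ : Finset (Fin n × Fin n)).piAntidiag (r+1), (s p : ℝ) * g s
        = ∑ s ∈ (univ : Finset (Fin n × Fin n)).piAntidiag r,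
            (α p.1 + (∑ j, s (p.1, j))) * (β p.2 + (∑ i, s (i, p.2))) * g s := by
      intro p
      rw [shift_sum r p g]
      exact Finset.sum_congr rfl (fun s _ => bump p s)
    have step3 : ((r:ℝ)+1) * ∑ s ∈ (univ : Finset (Fin n × Fin n)).piAntidiag (r+1), g s
        = ((∑ i, α i) + r) * ((∑ j, β j) + r)
            * ∑ s ∈ (univ : Finset (Fin n × Fin n)).piAntidiag r, g s := by
      rw [step1, Finset.sum_congr rfl (fun p (_ : p ∈ univ) => step2 p), Finset.sum_comm,
        Finset.mul_sum]
      apply Finset.sum_congr rfl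
      intro s hs
      simp only [Finset.mem_piAntidiag] at hs
      have htot : (∑ i, ∑ j, s (i, j)) = r := by
        rw [← Fintype.sum_prod_type]; exact hs.1
      have hrow : (∑ i, (α i + ((∑ j, s (i, j) : ℕ) : ℝ))) = (∑ i, α i) + r := by
        rw [Finset.sum_add_distrib]
        congr 1
        rw [← Nat.cast_sum, htot]
      have hcol : (∑ j, (β j + ((∑ i, s (i, j) : ℕ) : ℝ))) = (∑ j, β j) + r := by
        rw [Finset.sum_add_distrib]
        congr 1
        rw [← Nat.cast_sum]
        congr 1
        rw [Finset.sum_comm, htot]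
      calc ∑ p : Fin n × Fin n,
            (α p.1 + (∑ j, s (p.1, j) : ℕ)) * (β p.2 + (∑ i, s (i, p.2) : ℕ)) * g s
          = (∑ p : Fin n × Fin n,
              (α p.1 + (∑ j, s (p.1, j) : ℕ)) * (β p.2 + (∑ i, s (i, p.2) : ℕ))) * g s := by
            rw [Finset.sum_mul]
        _ = ((∑ i, (α i + ((∑ j, s (i, j) : ℕ) : ℝ))) * (∑ j, (β j + ((∑ i, s (i, j) : ℕ) : ℝ)))) * g s := by
            congr 1
            rw [Fintype.sum_prod_type,
              Finset.sum_mul_sum (univ : Finset (Fin n)) (univ : Finset (Fin n))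
                (fun i => α i + ((∑ j, s (i, j) : ℕ) : ℝ))
                (fun j => β j + ((∑ i, s (i, j) : ℕ) : ℝ))]
        _ = ((∑ i, α i) + r) * ((∑ j, β j) + r) * g s := by
            rw [hrow, hcol]
    have hr1 : ((r:ℝ)+1) ≠ 0 := by positivity
    have key := step3
    rw [ih] at key
    have hrf : ((r !:ℕ) : ℝ) ≠ 0 := by positivity
    rw [poch_succ (∑ i, α i) r, poch_succ (∑ j, β j) r, Nat.factorial_succ]
    push_cast
    field_simp at key ⊢
    linarith [key]
end

lemma inner_sum_eval (n M : ℕ) (a b : Fin n → ℕ) (γ : ℝ) (hγ : 0 < γ)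
    (hA : (∑ i, a i) ≤ M) :
    ∑ s ∈ Fintype.piFinset (fun _ : Fin n × Fin n => Finset.range (M+1)),
      (∏ i, poch (-(a i : ℝ)) (∑ j, s (i, j))) * (∏ j, poch (-(b j : ℝ)) (∑ i, s (i, j)))
        / ((∏ p, ((s p)! : ℝ)) * poch γ (∑ p, s p))
    = poch (γ + (∑ j, (b j : ℝ))) (∑ i, a i) / poch γ (∑ i, a i) := by
  set A := ∑ i, a i with hAdef
  set h : (Fin n × Fin n → ℕ) → ℝ := fun s =>
    (∏ i, poch (-(a i : ℝ)) (∑ j, s (i, j))) * (∏ j, poch (-(b j : ℝ)) (∑ i, s (i, j)))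
      / ((∏ p, ((s p)! : ℝ)) * poch γ (∑ p, s p)) with hh
  -- vanishing when some row sum exceeds a i
  have hvan : ∀ s : Fin n × Fin n → ℕ, (∃ i, a i < ∑ j, s (i, j)) → h s = 0 := by
    intro s ⟨i, hi⟩
    have : (∏ i, poch (-(a i : ℝ)) (∑ j, s (i, j))) = 0 :=
      Finset.prod_eq_zero (Finset.mem_univ i) (poch_neg_nat_eq_zero hi)
    simp [hh, this]
  -- step 1: restrict to total sum ≤ M, i.e. biUnion of piAntidiag
  have hdisj : (↑(Finset.range (M+1)) : Set ℕ).PairwiseDisjoint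
      (fun r => (univ : Finset (Fin n × Fin n)).piAntidiag r) := by
    intro r1 _ r2 _ hne
    simp only [Function.onFun, Finset.disjoint_left]
    intro s hs1 hs2
    simp only [Finset.mem_piAntidiag] at hs1 hs2
    exact hne (hs1.1 ▸ hs2.1)
  have hsub : (Finset.range (M+1)).biUnion
      (fun r => (univ : Finset (Fin n × Fin n)).piAntidiag r)
      ⊆ Fintype.piFinset (fun _ : Fin n × Fin n => Finset.range (M+1)) := by
    intro s hs
    simp only [Finset.mem_biUnion, Finset.mem_piAntidiag, Finset.mem_range] at hs
    obtain ⟨r, hr, hsum, -⟩ := hs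
    simp only [Fintype.mem_piFinset, Finset.mem_range]
    intro p
    have h2 : s p ≤ univ.sum s := Finset.single_le_sum (f := s) (fun q _ => Nat.zero_le _) (Finset.mem_univ p)
    omega
  have hzero : ∀ s ∈ Fintype.piFinset (fun _ : Fin n × Fin n => Finset.range (M+1)),
      s ∉ (Finset.range (M+1)).biUnion
        (fun r => (univ : Finset (Fin n × Fin n)).piAntidiag r) → h s = 0 := by
    intro s _ hs
    apply hvan
    by_contra hcon
    push_neg at hcon
    have hrows : ∑ i, ∑ j, s (i, j) ≤ A := Finset.sum_le_sum (fun i _ => hcon i)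
    have htot : ∑ p, s p = ∑ i, ∑ j, s (i, j) := Fintype.sum_prod_type s
    apply hs
    simp only [Finset.mem_biUnion, Finset.mem_piAntidiag, Finset.mem_range]
    exact ⟨∑ p, s p, by omega, rfl, fun _ _ => Finset.mem_univ _⟩
  rw [← Finset.sum_subset hsub hzero, Finset.sum_biUnion (hdisj)]
  -- step 2: evaluate each piAntidiag sum via G_lemma
  have heval : ∀ r : ℕ,
      ∑ s ∈ (univ : Finset (Fin n × Fin n)).piAntidiag r, h s
        = poch (-(A:ℝ)) r * poch (-((∑ j, (b j : ℝ)))) r / ((r ! : ℝ) * poch γ r) := by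
    intro r
    have hcongr : ∀ s ∈ (univ : Finset (Fin n × Fin n)).piAntidiag r,
        h s = (poch γ r)⁻¹ *
          ((∏ p, ((s p)! : ℝ))⁻¹ * (∏ i, poch (-(a i : ℝ)) (∑ j, s (i, j)))
            * (∏ j, poch (-(b j : ℝ)) (∑ i, s (i, j)))) := by
      intro s hs
      simp only [Finset.mem_piAntidiag] at hs
      have htot : ∑ p, s p = r := hs.1
      have hfac : (∏ p, ((s p)! : ℝ)) ≠ 0 := by positivity
      have hpg : poch γ r ≠ 0 := ne_of_gt (poch_pos hγ r)
      simp only [hh, htot]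
      rw [div_eq_mul_inv, mul_inv]
      ring
    rw [Finset.sum_congr rfl hcongr, ← Finset.mul_sum,
      G_lemma (fun i => -(a i : ℝ)) (fun j => -(b j : ℝ)) r]
    rw [show (∑ i, -(a i:ℝ)) = -(A:ℝ) by rw [Finset.sum_neg_distrib]; norm_cast,
        show (∑ j, -(b j:ℝ)) = -(∑ j, (b j:ℝ)) from Finset.sum_neg_distrib _]
    rw [div_eq_mul_inv, div_eq_mul_inv, mul_inv]
    ring
  rw [Finset.sum_congr rfl (fun r _ => heval r)]
  -- step 3: shrink range to A+1
  have hshrink : ∀ r ∈ Finset.range (M+1), r ∉ Finset.range (A+1) →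
      poch (-(A:ℝ)) r * poch (-((∑ j, (b j : ℝ)))) r / ((r ! : ℝ) * poch γ r) = 0 := by
    intro r _ hr
    simp only [Finset.mem_range] at hr
    rw [poch_neg_nat_eq_zero (show A < r by omega)]
    simp
  have hsub2 : Finset.range (A+1) ⊆ Finset.range (M+1) := by
    intro r hr; simp only [Finset.mem_range] at *; omega
  rw [← Finset.sum_subset hsub2 hshrink]
  -- step 4: Chu-Vandermonde
  have := cv A (-(∑ j, (b j : ℝ))) γ hγ
  rw [this]
  congr 2
  ring

lemma scalar_id (lam mu X d : ℕ) :
    poch (-((lam + mu + d : ℕ) : ℝ)) (lam + mu) / poch (-((lam + mu + X + d : ℕ) : ℝ)) (lam + mu)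
      * ((-1 : ℝ) ^ lam * (poch (((X + d : ℕ) : ℝ) + 1) mu
          / (poch (((d : ℕ) : ℝ) + 1) lam * poch ((((d : ℕ) : ℝ) + 1) + (lam : ℕ)) mu)))
    = 1 / poch (-((lam + mu + X + d : ℕ) : ℝ)) lam := by
  have hd : ((d ! : ℕ) : ℝ) ≠ 0 := by positivity
  have hXd : (((X + d)! : ℕ) : ℝ) ≠ 0 := by positivity
  have hmXd : (((mu + X + d)! : ℕ) : ℝ) ≠ 0 := by positivity
  have h1 := poch_neg_fac (lam + mu) d
  have h2 := poch_neg_fac (lam + mu) (X + d)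
  rw [show lam + mu + (X + d) = lam + mu + X + d by omega] at h2
  have h3 := poch_neg_fac lam (mu + X + d)
  rw [show lam + (mu + X + d) = lam + mu + X + d by omega] at h3
  have h4 := poch_cast_succ_fac d (lam + mu)
  rw [show d + (lam + mu) = lam + mu + d by omega] at h4
  have h5 := poch_cast_succ_fac (X + d) mu
  rw [show X + d + mu = mu + X + d by omega] at h5
  have hmerge : poch (((d : ℝ)) + 1) lam * poch ((((d : ℝ)) + 1) + (lam : ℕ)) mu
      = poch (((d : ℝ)) + 1) (lam + mu) := (poch_add ((d : ℝ) + 1) lam mu).symm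
  rw [hmerge]
  have e1 : poch (-((lam + mu + d : ℕ) : ℝ)) (lam + mu)
      = (-1) ^ (lam + mu) * ((lam + mu + d)! : ℝ) / (d ! : ℝ) := by
    rw [eq_div_iff hd]; exact h1
  have e2 : poch (-((lam + mu + X + d : ℕ) : ℝ)) (lam + mu)
      = (-1) ^ (lam + mu) * ((lam + mu + X + d)! : ℝ) / ((X + d)! : ℝ) := by
    rw [eq_div_iff hXd]; exact h2
  have e3 : poch (-((lam + mu + X + d : ℕ) : ℝ)) lam
      = (-1) ^ lam * ((lam + mu + X + d)! : ℝ) / ((mu + X + d)! : ℝ) := by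
    rw [eq_div_iff hmXd]; exact h3
  have e4 : poch (((d : ℝ)) + 1) (lam + mu) = ((lam + mu + d)! : ℝ) / (d ! : ℝ) := by
    rw [eq_div_iff hd]; exact h4
  have e5 : poch (((X + d : ℕ) : ℝ) + 1) mu = ((mu + X + d)! : ℝ) / ((X + d)! : ℝ) := by
    rw [eq_div_iff hXd]; push_cast at h5 ⊢; exact h5
  rw [e1, e2, e3, e4, e5]
  have hfacs : (((lam + mu + d)! : ℕ) : ℝ) ≠ 0 := by positivity
  have hfacN : (((lam + mu + X + d)! : ℕ) : ℝ) ≠ 0 := by positivity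
  have hsq : ((-1 : ℝ)) ^ lam * (-1) ^ lam = 1 := by
    rw [← pow_add]
    exact Even.neg_one_pow ⟨lam, by ring⟩
  field_simp
  ring_nf
  have h3l : ((-1:ℝ)) ^ (lam * 3) = (-1) ^ lam := by
    rw [pow_mul]
    rcases Nat.even_or_odd lam with he | ho
    · rw [he.neg_one_pow]; norm_num
    · rw [ho.neg_one_pow]
      simp [pow_succ, pow_mul]
  exact Even.neg_one_pow ⟨lam, by ring⟩

noncomputable def coefR (n : ℕ) (m x : Fin n → ℕ) (c : ℝ) (w : Fin n × Fin n → ℕ) : ℝ :=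
  ((∏ i, poch (-(m i : ℝ)) (∑ j, w (i, j))) * ∏ i, poch (-(x i : ℝ)) (∑ j, w (j, i)))
    / ((∏ p, ((w p)! : ℝ)) * poch c (∑ p, w p))

lemma coefR_eq_zero_of_bad (n : ℕ) (m x : Fin n → ℕ) (c : ℝ) (w : Fin n × Fin n → ℕ)
    (h : ¬ ((∀ i, (∑ j, w (i, j)) ≤ m i) ∧ (∀ i, (∑ j, w (j, i)) ≤ x i))) :
    coefR n m x c w = 0 := by
  rcases not_and_or.mp h with h | h <;> push_neg at h <;> obtain ⟨i, hi⟩ := h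
  · have : (∏ i, poch (-(m i : ℝ)) (∑ j, w (i, j))) = 0 :=
      Finset.prod_eq_zero (Finset.mem_univ i) (poch_neg_nat_eq_zero hi)
    simp [coefR, this]
  · have : (∏ i, poch (-(x i : ℝ)) (∑ j, w (j, i))) = 0 :=
      Finset.prod_eq_zero (Finset.mem_univ i) (poch_neg_nat_eq_zero hi)
    simp [coefR, this]

lemma star_lemma (n N : ℕ) (m x : Fin n → ℕ)
    (hmx : (∑ i, m i) + (∑ i, x i) ≤ N)
    (l : Fin n × Fin n → ℕ) :
    poch ((∑ i, (x i : ℝ)) - N) (∑ i, m i) / poch (-(N : ℝ)) (∑ i, m i)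
      * ((-1 : ℝ) ^ (∑ p, l p)
        * ∑ s ∈ Fintype.piFinset (fun _ : Fin n × Fin n => Finset.range ((∑ i, m i) + 1)),
            coefR n m x (((N - (∑ i, m i) - (∑ i, x i) : ℕ) : ℝ) + 1) (l + s)
              * ∏ p, ((l p + s p).choose (l p) : ℝ))
    = coefR n m x (-(N : ℝ)) l := by
  set M := ∑ i, m i with hMdef
  set X := ∑ i, x i with hXdef
  set d := N - M - X with hddef
  by_cases hgood : (∀ i, (∑ j, l (i, j)) ≤ m i) ∧ (∀ i, (∑ j, l (j, i)) ≤ x i)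
  case neg =>
    rw [coefR_eq_zero_of_bad n m x _ l hgood]
    have hz : ∀ s ∈ Fintype.piFinset (fun _ : Fin n × Fin n => Finset.range (M + 1)),
        coefR n m x (((d : ℕ) : ℝ) + 1) (l + s) * ∏ p, ((l p + s p).choose (l p) : ℝ) = 0 := by
      intro s _
      rw [coefR_eq_zero_of_bad, zero_mul]
      intro ⟨h1, h2⟩
      apply hgood
      constructor
      · intro i
        have := h1 i
        have hsum : (∑ j, (l + s) (i, j)) = (∑ j, l (i, j)) + (∑ j, s (i, j)) := by
          simp [Pi.add_apply, Finset.sum_add_distrib]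
        omega
      · intro i
        have := h2 i
        have hsum : (∑ j, (l + s) (j, i)) = (∑ j, l (j, i)) + (∑ j, s (j, i)) := by
          simp [Pi.add_apply, Finset.sum_add_distrib]
        omega
    rw [Finset.sum_congr rfl hz]
    simp
  case pos =>
    obtain ⟨hrow, hcol⟩ := hgood
    classical
    set R : Fin n → ℕ := fun i => ∑ j, l (i, j) with hRdef
    set C : Fin n → ℕ := fun i => ∑ j, l (j, i) with hCdef
    set lam := ∑ p, l p with hlamdef
    set a : Fin n → ℕ := fun i => m i - R i with hadef
    set b : Fin n → ℕ := fun i => x i - C i with hbdef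
    set A := ∑ i, a i with hAdef
    set B := ∑ i, b i with hBdef
    have hlamR : lam = ∑ i, R i := Fintype.sum_prod_type l
    have hlamC : lam = ∑ i, C i := by
      rw [hlamdef, Fintype.sum_prod_type]
      exact Finset.sum_comm
    have hAeq : A + lam = M := by
      rw [hAdef, hlamR, hMdef, ← Finset.sum_add_distrib]
      apply Finset.sum_congr rfl
      intro i _
      have hRi : R i = ∑ j, l (i, j) := rfl
      have hai : a i = m i - R i := rfl
      have := hrow i
      omega
    have hBeq : B + lam = X := by
      rw [hBdef, hlamC, hXdef, ← Finset.sum_add_distrib]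
      apply Finset.sum_congr rfl
      intro i _
      have hCi : C i = ∑ j, l (j, i) := rfl
      have hbi : b i = x i - C i := rfl
      have := hcol i
      omega
    have hNval : N = lam + A + X + d := by omega
    have hMval : M = lam + A := by omega
    set c' : ℝ := ((d : ℕ) : ℝ) + 1 with hc'def
    set γ : ℝ := c' + (lam : ℝ) with hγdef
    have hc'pos : (0 : ℝ) < c' := by positivity
    have hγpos : (0 : ℝ) < γ := by rw [hγdef]; positivity
    set Fl : ℝ := ∏ p, ((l p)! : ℝ) with hFldef
    set Num : ℝ := (∏ i, poch (-(m i : ℝ)) (R i)) * (∏ i, poch (-(x i : ℝ)) (C i)) with hNumdef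
    -- per-s identity
    have key : ∀ s ∈ Fintype.piFinset (fun _ : Fin n × Fin n => Finset.range (M + 1)),
        coefR n m x c' (l + s) * ∏ p, ((l p + s p).choose (l p) : ℝ)
        = (Num / (Fl * poch c' lam)) *
          ((∏ i, poch (-(a i : ℝ)) (∑ j, s (i, j))) * (∏ j, poch (-(b j : ℝ)) (∑ i, s (i, j)))
            / ((∏ p, ((s p)! : ℝ)) * poch γ (∑ p, s p))) := by
      intro s _
      have hsr : ∀ i, (∑ j, (l + s) (i, j)) = R i + (∑ j, s (i, j)) := by
        intro i; simp [Pi.add_apply, Finset.sum_add_distrib, hRdef]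
      have hsc : ∀ i, (∑ j, (l + s) (j, i)) = C i + (∑ j, s (j, i)) := by
        intro i; simp [Pi.add_apply, Finset.sum_add_distrib, hCdef]
      have htot : (∑ p, (l + s) p) = lam + (∑ p, s p) := by
        simp [Pi.add_apply, Finset.sum_add_distrib, hlamdef]
      have hprow : (∏ i, poch (-(m i : ℝ)) (∑ j, (l + s) (i, j)))
          = (∏ i, poch (-(m i : ℝ)) (R i)) * (∏ i, poch (-(a i : ℝ)) (∑ j, s (i, j))) := by
        rw [← Finset.prod_mul_distrib]
        apply Finset.prod_congr rfl
        intro i _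
        rw [hsr i, poch_add]
        congr 1
        have hRi : R i = ∑ j, l (i, j) := rfl
        have hle : R i ≤ m i := by rw [hRi]; exact hrow i
        have hcast : -((a i : ℕ) : ℝ) = -(m i : ℝ) + (R i : ℝ) := by
          have hai : a i = m i - R i := rfl
          rw [hai, Nat.cast_sub hle]
          ring
        rw [hcast]
      have hpcol : (∏ i, poch (-(x i : ℝ)) (∑ j, (l + s) (j, i)))
          = (∏ i, poch (-(x i : ℝ)) (C i)) * (∏ j, poch (-(b j : ℝ)) (∑ i, s (i, j))) := by
        rw [← Finset.prod_mul_distrib]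
        apply Finset.prod_congr rfl
        intro i _
        rw [hsc i, poch_add]
        congr 1
        · have hCi : C i = ∑ j, l (j, i) := rfl
          have hle : C i ≤ x i := by rw [hCi]; exact hcol i
          have hcast : -((b i : ℕ) : ℝ) = -(x i : ℝ) + (C i : ℝ) := by
            have hbi : b i = x i - C i := rfl
            rw [hbi, Nat.cast_sub hle]
            ring
          rw [hcast]
      have hFAC : (∏ p, (((l + s) p)! : ℝ))
          = (∏ p, ((l p + s p).choose (l p) : ℝ)) * Fl * (∏ p, ((s p)! : ℝ)) := by
        rw [hFldef, ← Finset.prod_mul_distrib, ← Finset.prod_mul_distrib]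
        apply Finset.prod_congr rfl
        intro p _
        have h1 := Nat.add_choose_mul_factorial_mul_factorial (l p) (s p)
        have h2 : (l p + s p).choose (s p) = (l p + s p).choose (l p) := by
          have h3 := Nat.choose_symm (Nat.le_add_right (l p) (s p))
          rwa [Nat.add_sub_cancel_left] at h3
        rw [h2] at h1
        simp only [Pi.add_apply]
        rw [← h1]
        push_cast
        ring
      have hpoch : poch c' (lam + (∑ p, s p)) = poch c' lam * poch γ (∑ p, s p) := by
        rw [poch_add]
      have hchne : (∏ p, ((l p + s p).choose (l p) : ℝ)) ≠ 0 := by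
        apply _root_.ne_of_gt
        apply Finset.prod_pos
        intro p _
        exact_mod_cast Nat.choose_pos (Nat.le_add_right (l p) (s p))
      have hFlne : Fl ≠ 0 := by rw [hFldef]; positivity
      have hFsne : (∏ p, ((s p)! : ℝ)) ≠ 0 := by positivity
      have hpc'ne : poch c' lam ≠ 0 := _root_.ne_of_gt (poch_pos hc'pos lam)
      have hpγne : poch γ (∑ p, s p) ≠ 0 := _root_.ne_of_gt (poch_pos hγpos _)
      rw [coefR, hprow, hpcol, hFAC, htot, hpoch, hNumdef]
      field_simp
    rw [Finset.sum_congr rfl key, ← Finset.mul_sum,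
      inner_sum_eval n M a b γ hγpos (by omega : (∑ i, a i) ≤ M)]
    -- now pure scalar manipulation
    have hRHS : coefR n m x (-(N : ℝ)) l = Num / (Fl * poch (-(N : ℝ)) lam) := by
      rw [coefR, hNumdef, hFldef, hlamdef]
    rw [hRHS]
    have hsc := scalar_id lam A X d
    have c1 : (∑ i, (x i : ℝ)) - (N : ℝ) = -(((lam + A + d : ℕ)) : ℝ) := by
      have : (∑ i, (x i : ℝ)) = (X : ℝ) := by rw [hXdef]; push_cast; rfl
      rw [this]
      rw [hNval]
      push_cast
      ring
    have c2 : -(N : ℝ) = -(((lam + A + X + d : ℕ)) : ℝ) := by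
      rw [hNval]
    have c3 : γ + (∑ j, (b j : ℝ)) = ((X + d : ℕ) : ℝ) + 1 := by
      have hB' : (∑ j, (b j : ℝ)) = (B : ℝ) := by rw [hBdef]; push_cast; rfl
      rw [hB', hγdef, hc'def]
      have : (X : ℕ) = B + lam := by omega
      rw [this]
      push_cast
      ring
    have c4 : (∑ i, a i) = A := hAdef.symm
    rw [c1, c2, c3, c4, hMval]
    have hγform : γ = (((d : ℕ) : ℝ) + 1) + ((lam : ℕ) : ℝ) := by rw [hγdef, hc'def]
    rw [hγform, hc'def]
    calc poch (-((lam + A + d : ℕ) : ℝ)) (lam + A) / poch (-((lam + A + X + d : ℕ) : ℝ)) (lam + A)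
          * ((-1 : ℝ) ^ lam * (Num / (Fl * poch (((d : ℕ) : ℝ) + 1) lam)
            * (poch (((X + d : ℕ) : ℝ) + 1) A / poch ((((d : ℕ) : ℝ) + 1) + ((lam : ℕ) : ℝ)) A)))
        = (poch (-((lam + A + d : ℕ) : ℝ)) (lam + A) / poch (-((lam + A + X + d : ℕ) : ℝ)) (lam + A)
          * ((-1 : ℝ) ^ lam * (poch (((X + d : ℕ) : ℝ) + 1) A
            / (poch (((d : ℕ) : ℝ) + 1) lam * poch ((((d : ℕ) : ℝ) + 1) + ((lam : ℕ) : ℝ)) A))))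
          * (Num / Fl) := by
          field_simp
      _ = (1 / poch (-((lam + A + X + d : ℕ) : ℝ)) lam) * (Num / Fl) := by rw [hsc]
      _ = Num / (Fl * poch (-((lam + A + X + d : ℕ) : ℝ)) lam) := by
          rw [_root_.div_mul_div_comm, one_mul,
            mul_comm (poch (-((lam + A + X + d : ℕ) : ℝ)) lam) Fl]

lemma F1_eq (n : ℕ) (c : ℝ) (m x : Fin n → ℕ) (u : Fin n → Fin n → ℝ) :
    F1 n c m x u
      = ∑ w ∈ Fintype.piFinset (fun _ : Fin n × Fin n => Finset.range ((∑ i, m i) + 1)),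
          coefR n m x c w * ∏ p, (u p.1 p.2) ^ (w p) := by
  rw [F1]
  rw [Finset.sum_filter_of_ne]
  · apply Finset.sum_nbij' (i := fun k (p : Fin n × Fin n) => k p.1 p.2)
      (j := fun w i j => w (i, j))
    · intro k hk
      simp only [Fintype.mem_piFinset, Finset.mem_range] at hk ⊢
      exact fun p => hk p.1 p.2
    · intro w hw
      simp only [Fintype.mem_piFinset, Finset.mem_range] at hw ⊢
      exact fun i j => hw (i, j)
    · intro k hk; rfl
    · intro w hw; rfl
    · intro k hk
      simp only [coefR]
      have e1 : (∏ p : Fin n × Fin n, ((k p.1 p.2)! : ℝ)) = ∏ i, ∏ j, ((k i j)! : ℝ) :=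
        Fintype.prod_prod_type _
      have e2 : (∑ p : Fin n × Fin n, k p.1 p.2) = ∑ i, ∑ j, k i j :=
        Fintype.sum_prod_type _
      have e3 : (∏ p : Fin n × Fin n, (u p.1 p.2) ^ (k p.1 p.2)) = ∏ i, ∏ j, u i j ^ k i j :=
        Fintype.prod_prod_type _
      rw [e1, e2, e3]
  · intro k hk hne
    by_contra hcon
    apply hne
    rcases not_and_or.mp hcon with h | h <;> push_neg at h <;> obtain ⟨i, hi⟩ := h
    · have hz : (∏ i, poch (-(m i : ℝ)) (∑ j, k i j)) = 0 :=
        Finset.prod_eq_zero (Finset.mem_univ i) (poch_neg_nat_eq_zero hi)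
      rw [hz]
      ring
    · have hz : (∏ i, poch (-(x i : ℝ)) (∑ j, k j i)) = 0 :=
        Finset.prod_eq_zero (Finset.mem_univ i) (poch_neg_nat_eq_zero hi)
      rw [hz]
      ring

/-- The terminating Euler-type transformation (2.3):
`F₁⁽ⁿ⁾(-m;-x;-N;u) = [(∑x - N)_{∑m}/(-N)_{∑m}] F₁⁽ⁿ⁾(-m;-x;N+1-∑(x+m);1-u)`. -/
theorem stmt_12 (N n : ℕ) (hN : 0 < N) (hn : 0 < n)
    (u : Fin n → Fin n → ℝ) (m x : Fin n → ℕ)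
    (hmx : (∑ i, m i) + (∑ i, x i) ≤ N) :
    F1 n (-(N : ℝ)) m x u
      = poch ((∑ i, (x i : ℝ)) - N) (∑ i, m i) / poch (-(N : ℝ)) (∑ i, m i) *
        F1 n ((N : ℝ) + 1 - ∑ i, ((x i : ℝ) + (m i : ℝ))) m x (fun i j => 1 - u i j) := by
  have hc'' : (N : ℝ) + 1 - ∑ i, ((x i : ℝ) + (m i : ℝ))
      = ((N - (∑ i, m i) - (∑ i, x i) : ℕ) : ℝ) + 1 := by
    have h1 : (∑ i, ((x i : ℝ) + (m i : ℝ)))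
        = ((∑ i, x i : ℕ) : ℝ) + ((∑ i, m i : ℕ) : ℝ) := by
      rw [Finset.sum_add_distrib]; push_cast; ring
    have h2 : ((N - (∑ i, m i) - (∑ i, x i) : ℕ) : ℝ)
        = (N : ℝ) - ((∑ i, m i : ℕ) : ℝ) - ((∑ i, x i : ℕ) : ℝ) := by
      rw [Nat.cast_sub (by omega), Nat.cast_sub (by omega)]
    rw [h1, h2]
    ring
  rw [hc'', F1_eq n (-(N : ℝ)) m x u, F1_eq n _ m x (fun i j => 1 - u i j)]
  -- expand the (1-u) powers
  have hexp : ∀ w ∈ Fintype.piFinset (fun _ : Fin n × Fin n => Finset.range ((∑ i, m i) + 1)),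
      coefR n m x (((N - (∑ i, m i) - (∑ i, x i) : ℕ) : ℝ) + 1) w
          * ∏ p : Fin n × Fin n, ((1 : ℝ) - u p.1 p.2) ^ (w p)
      = ∑ l ∈ Fintype.piFinset (fun _ : Fin n × Fin n => Finset.range ((∑ i, m i) + 1)),
          coefR n m x (((N - (∑ i, m i) - (∑ i, x i) : ℕ) : ℝ) + 1) w
            * (∏ p, ((w p).choose (l p) : ℝ))
            * ∏ p : Fin n × Fin n, (-(u p.1 p.2)) ^ (l p) := by
    intro w hw
    have hbin : ∀ p : Fin n × Fin n, ((1 : ℝ) - u p.1 p.2) ^ (w p)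
        = ∑ i ∈ Finset.range (w p + 1), ((w p).choose i : ℝ) * (-(u p.1 p.2)) ^ i := by
      intro p
      rw [show (1 : ℝ) - u p.1 p.2 = -(u p.1 p.2) + 1 by ring, add_pow]
      apply Finset.sum_congr rfl
      intro i _
      rw [one_pow]
      ring
    rw [Finset.prod_congr rfl (fun p _ => hbin p), Finset.prod_univ_sum]
    have hsub : Fintype.piFinset (fun p : Fin n × Fin n => Finset.range (w p + 1))
        ⊆ Fintype.piFinset (fun _ : Fin n × Fin n => Finset.range ((∑ i, m i) + 1)) := by
      intro l hl
      simp only [Fintype.mem_piFinset, Finset.mem_range] at hl ⊢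
      intro p
      have h1 := hl p
      simp only [Fintype.mem_piFinset, Finset.mem_range] at hw
      have h2 := hw p
      omega
    rw [← Finset.sum_subset hsub]
    · rw [Finset.mul_sum]
      apply Finset.sum_congr rfl
      intro l _
      rw [Finset.prod_mul_distrib]
      ring
    · intro l _ hl
      simp only [Fintype.mem_piFinset, Finset.mem_range] at hl
      push_neg at hl
      obtain ⟨p, hp⟩ := hl
      have hz : ((w p).choose (l p) : ℝ) = 0 := by
        rw [Nat.choose_eq_zero_of_lt (by omega)]
        norm_num
      rw [Finset.prod_eq_zero (Finset.mem_univ p) hz]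
      ring
  rw [Finset.sum_congr rfl hexp]
  -- reindex the double sum
  have hre :
      ∑ w ∈ Fintype.piFinset (fun _ : Fin n × Fin n => Finset.range ((∑ i, m i) + 1)),
        ∑ l ∈ Fintype.piFinset (fun _ : Fin n × Fin n => Finset.range ((∑ i, m i) + 1)),
          coefR n m x (((N - (∑ i, m i) - (∑ i, x i) : ℕ) : ℝ) + 1) w
            * (∏ p, ((w p).choose (l p) : ℝ))
            * ∏ p : Fin n × Fin n, (-(u p.1 p.2)) ^ (l p)
      = ∑ l ∈ Fintype.piFinset (fun _ : Fin n × Fin n => Finset.range ((∑ i, m i) + 1)),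
        ∑ s ∈ Fintype.piFinset (fun _ : Fin n × Fin n => Finset.range ((∑ i, m i) + 1)),
          coefR n m x (((N - (∑ i, m i) - (∑ i, x i) : ℕ) : ℝ) + 1) (l + s)
            * (∏ p, (((l + s) p).choose (l p) : ℝ))
            * ∏ p : Fin n × Fin n, (-(u p.1 p.2)) ^ (l p) := by
    rw [← Finset.sum_product', ← Finset.sum_product']
    have hz1 : ∀ q ∈ (Fintype.piFinset (fun _ : Fin n × Fin n => Finset.range ((∑ i, m i) + 1)))
          ×ˢ (Fintype.piFinset (fun _ : Fin n × Fin n => Finset.range ((∑ i, m i) + 1))),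
        (coefR n m x (((N - (∑ i, m i) - (∑ i, x i) : ℕ) : ℝ) + 1) q.1
          * (∏ p, ((q.1 p).choose (q.2 p) : ℝ))
          * ∏ p : Fin n × Fin n, (-(u p.1 p.2)) ^ (q.2 p)) ≠ 0 →
        (∀ p, q.2 p ≤ q.1 p) := by
      intro q _ hne
      by_contra hcon
      push_neg at hcon
      obtain ⟨p, hp⟩ := hcon
      apply hne
      have hz : ((q.1 p).choose (q.2 p) : ℝ) = 0 := by
        rw [Nat.choose_eq_zero_of_lt hp]
        norm_num
      rw [Finset.prod_eq_zero (Finset.mem_univ p) hz]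
      ring
    have hz2 : ∀ q ∈ (Fintype.piFinset (fun _ : Fin n × Fin n => Finset.range ((∑ i, m i) + 1)))
          ×ˢ (Fintype.piFinset (fun _ : Fin n × Fin n => Finset.range ((∑ i, m i) + 1))),
        (coefR n m x (((N - (∑ i, m i) - (∑ i, x i) : ℕ) : ℝ) + 1) (q.1 + q.2)
          * (∏ p, (((q.1 + q.2) p).choose (q.1 p) : ℝ))
          * ∏ p : Fin n × Fin n, (-(u p.1 p.2)) ^ (q.1 p)) ≠ 0 →
        (∀ p, q.1 p + q.2 p ≤ (∑ i, m i)) := by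
      intro q _ hne
      by_contra hcon
      push_neg at hcon
      obtain ⟨p, hp⟩ := hcon
      apply hne
      have hbad : ¬ ((∀ i, (∑ j, (q.1 + q.2) (i, j)) ≤ m i)
          ∧ (∀ i, (∑ j, (q.1 + q.2) (j, i)) ≤ x i)) := by
        rintro ⟨h1, -⟩
        have h2 := h1 p.1
        have h3 : (q.1 + q.2) (p.1, p.2) ≤ ∑ j, (q.1 + q.2) (p.1, j) :=
          Finset.single_le_sum (f := fun j => (q.1 + q.2) (p.1, j))
            (fun j _ => Nat.zero_le _) (Finset.mem_univ p.2)
        have h4 : m p.1 ≤ ∑ i, m i :=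
          Finset.single_le_sum (f := m) (fun i _ => Nat.zero_le _) (Finset.mem_univ p.1)
        have h5 : (q.1 + q.2) (p.1, p.2) = q.1 p + q.2 p := rfl
        omega
      rw [coefR_eq_zero_of_bad n m x _ _ hbad]
      ring
    rw [← Finset.sum_filter_of_ne hz1, ← Finset.sum_filter_of_ne hz2]
    apply Finset.sum_nbij'
      (i := fun q : (Fin n × Fin n → ℕ) × (Fin n × Fin n → ℕ) =>
        (q.2, fun p => q.1 p - q.2 p))
      (j := fun q : (Fin n × Fin n → ℕ) × (Fin n × Fin n → ℕ) => (q.1 + q.2, q.1))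
    · intro q hq
      simp only [Finset.mem_filter, Finset.mem_product, Fintype.mem_piFinset,
        Finset.mem_range] at hq ⊢
      obtain ⟨⟨hw, hl⟩, hle⟩ := hq
      refine ⟨⟨fun p => hl p, fun p => ?_⟩, fun p => ?_⟩
      · have := hw p; have := hle p; omega
      · have := hw p; have := hle p
        have he : (q.2 + fun p => q.1 p - q.2 p) p = q.2 p + (q.1 p - q.2 p) := rfl
        omega
    · intro q hq
      simp only [Finset.mem_filter, Finset.mem_product, Fintype.mem_piFinset,
        Finset.mem_range] at hq ⊢
      obtain ⟨⟨hl, hs⟩, hle⟩ := hq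
      refine ⟨⟨fun p => ?_, fun p => hl p⟩, fun p => ?_⟩
      · have := hle p
        have he : (q.1 + q.2) p = q.1 p + q.2 p := rfl
        omega
      · have he : (q.1 + q.2) p = q.1 p + q.2 p := rfl
        omega
    · intro q hq
      simp only [Finset.mem_filter, Finset.mem_product, Fintype.mem_piFinset,
        Finset.mem_range] at hq
      obtain ⟨⟨hw, hl⟩, hle⟩ := hq
      apply Prod.ext
      · funext p
        have he : (q.2 + fun p => q.1 p - q.2 p) p = q.2 p + (q.1 p - q.2 p) := rfl
        have := hle p
        simp only [he]
        omega
      · rfl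
    · intro q hq
      apply Prod.ext
      · rfl
      · funext p
        have he : (q.1 + q.2) p = q.1 p + q.2 p := rfl
        simp only [he]
        omega
    · intro q hq
      simp only [Finset.mem_filter, Finset.mem_product, Fintype.mem_piFinset,
        Finset.mem_range] at hq
      obtain ⟨⟨hw, hl⟩, hle⟩ := hq
      have hws : (q.2 + fun p => q.1 p - q.2 p) = q.1 := by
        funext p
        have he : (q.2 + fun p => q.1 p - q.2 p) p = q.2 p + (q.1 p - q.2 p) := rfl
        rw [he]
        have := hle p
        omega
      show _ = coefR n m x _ ((q.2 + fun p => q.1 p - q.2 p)) * _ * _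
      rw [hws]
  rw [hre]
  -- pull out per-l factors and apply star_lemma
  rw [Finset.mul_sum]
  have hfin : ∀ l ∈ Fintype.piFinset (fun _ : Fin n × Fin n => Finset.range ((∑ i, m i) + 1)),
      poch ((∑ i, (x i : ℝ)) - N) (∑ i, m i) / poch (-(N : ℝ)) (∑ i, m i) *
        ∑ s ∈ Fintype.piFinset (fun _ : Fin n × Fin n => Finset.range ((∑ i, m i) + 1)),
          coefR n m x (((N - (∑ i, m i) - (∑ i, x i) : ℕ) : ℝ) + 1) (l + s)
            * (∏ p, (((l + s) p).choose (l p) : ℝ))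
            * ∏ p : Fin n × Fin n, (-(u p.1 p.2)) ^ (l p)
      = coefR n m x (-(N : ℝ)) l * ∏ p : Fin n × Fin n, (u p.1 p.2) ^ (l p) := by
    intro l _
    have hsign : (∏ p : Fin n × Fin n, (-(u p.1 p.2)) ^ (l p))
        = (-1 : ℝ) ^ (∑ p, l p) * ∏ p : Fin n × Fin n, (u p.1 p.2) ^ (l p) := by
      rw [← Finset.prod_pow_eq_pow_sum, ← Finset.prod_mul_distrib]
      exact Finset.prod_congr rfl (fun p _ => by rw [neg_pow])
    have hch : ∀ s : Fin n × Fin n → ℕ,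
        (∏ p, (((l + s) p).choose (l p) : ℝ)) = ∏ p, ((l p + s p).choose (l p) : ℝ) := by
      intro s
      rfl
    have hstar := star_lemma n N m x hmx l
    rw [Finset.sum_congr rfl (fun s _ =>
      by rw [hch s] :
      ∀ s ∈ Fintype.piFinset (fun _ : Fin n × Fin n => Finset.range ((∑ i, m i) + 1)),
        coefR n m x (((N - (∑ i, m i) - (∑ i, x i) : ℕ) : ℝ) + 1) (l + s)
            * (∏ p, (((l + s) p).choose (l p) : ℝ))
            * ∏ p : Fin n × Fin n, (-(u p.1 p.2)) ^ (l p)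
        = coefR n m x (((N - (∑ i, m i) - (∑ i, x i) : ℕ) : ℝ) + 1) (l + s)
            * (∏ p, ((l p + s p).choose (l p) : ℝ))
            * ∏ p : Fin n × Fin n, (-(u p.1 p.2)) ^ (l p))]
    rw [← Finset.sum_mul, hsign]
    calc poch ((∑ i, (x i : ℝ)) - N) (∑ i, m i) / poch (-(N : ℝ)) (∑ i, m i) *
        ((∑ s ∈ Fintype.piFinset (fun _ : Fin n × Fin n => Finset.range ((∑ i, m i) + 1)),
          coefR n m x (((N - (∑ i, m i) - (∑ i, x i) : ℕ) : ℝ) + 1) (l + s)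
            * (∏ p, ((l p + s p).choose (l p) : ℝ)))
          * ((-1 : ℝ) ^ (∑ p, l p) * ∏ p : Fin n × Fin n, (u p.1 p.2) ^ (l p)))
        = (poch ((∑ i, (x i : ℝ)) - N) (∑ i, m i) / poch (-(N : ℝ)) (∑ i, m i) *
            ((-1 : ℝ) ^ (∑ p, l p) *
              ∑ s ∈ Fintype.piFinset (fun _ : Fin n × Fin n => Finset.range ((∑ i, m i) + 1)),
                coefR n m x (((N - (∑ i, m i) - (∑ i, x i) : ℕ) : ℝ) + 1) (l + s)
                  * ∏ p, ((l p + s p).choose (l p) : ℝ)))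
          * ∏ p : Fin n × Fin n, (u p.1 p.2) ^ (l p) := by ring
      _ = coefR n m x (-(N : ℝ)) l * ∏ p : Fin n × Fin n, (u p.1 p.2) ^ (l p) := by
          rw [hstar]
  rw [Finset.sum_congr rfl hfin]
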